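/- Consider the split-signature metric g = x² dt² + dt dz + dz dt + dx dy + dy dx on ℝ⁴ with coordinates (t,x,y,z). Then g is Ricci-flat, and for any constants c⁰, c', c'' ∈ ℝ the function σ = c⁰ + c' t + c'' x satisfies ∇∇σ + P σ = 0, where ∇ is the Levi-Civita connection and P the Schouten tensor of g. Hence the space of such almost Einstein scales is 3-dimensional. Moreover each dσ is null: g⁻¹(dσ,dσ) = 0. -/

import Mathlib

noncomputable section

/-- Partial derivative of a function on `ι → ℝ` in the `i`-th coordinate direction. -/
def pderiv' {ι : Type} [Fintype ι] [DecidableEq ι]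
    (i : ι) (f : (ι → ℝ) → ℝ) (x : ι → ℝ) : ℝ :=
  fderiv ℝ f x (Pi.single i 1)

/-- Christoffel symbols `Γ^k_{ij}` of the metric `g` (with pointwise inverse `ginv`). -/
def christoffel {ι : Type} [Fintype ι] [DecidableEq ι]
    (g ginv : (ι → ℝ) → ι → ι → ℝ) (k i j : ι) (x : ι → ℝ) : ℝ :=
  (1/2) * ∑ l, ginv x k l *
    (pderiv' i (fun y => g y l j) x + pderiv' j (fun y => g y l i) x
      - pderiv' l (fun y => g y i j) x)

/-- Curvature tensor `R^l_{ijk}`, i.e. `R(∂_i,∂_j)∂_k = R^l_{ijk} ∂_l`. -/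
def riemUp {ι : Type} [Fintype ι] [DecidableEq ι]
    (g ginv : (ι → ℝ) → ι → ι → ℝ) (l i j k : ι) (x : ι → ℝ) : ℝ :=
  pderiv' i (fun y => christoffel g ginv l j k y) x
    - pderiv' j (fun y => christoffel g ginv l i k y) x
    + ∑ m, christoffel g ginv l i m x * christoffel g ginv m j k x
    - ∑ m, christoffel g ginv l j m x * christoffel g ginv m i k x

/-- Ricci curvature `Ric_{jk} = R^l_{l j k}`. -/
def ricciT {ι : Type} [Fintype ι] [DecidableEq ι]
    (g ginv : (ι → ℝ) → ι → ι → ℝ) (i j : ι) (x : ι → ℝ) : ℝ :=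
  ∑ l, riemUp g ginv l l i j x

/-- Scalar curvature. -/
def scalT {ι : Type} [Fintype ι] [DecidableEq ι]
    (g ginv : (ι → ℝ) → ι → ι → ℝ) (x : ι → ℝ) : ℝ :=
  ∑ i, ∑ j, ginv x i j * ricciT g ginv i j x

/-- Covariant Hessian `∇_i ∇_j σ` of a function. -/
def hessT {ι : Type} [Fintype ι] [DecidableEq ι]
    (g ginv : (ι → ℝ) → ι → ι → ℝ) (σ : (ι → ℝ) → ℝ) (i j : ι) (x : ι → ℝ) : ℝ :=
  pderiv' i (fun y => pderiv' j σ y) x - ∑ k, christoffel g ginv k i j x * pderiv' k σ x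

/-- Laplacian `Δσ = g^{ij} ∇_i∇_j σ`. -/
def lapT {ι : Type} [Fintype ι] [DecidableEq ι]
    (g ginv : (ι → ℝ) → ι → ι → ℝ) (σ : (ι → ℝ) → ℝ) (x : ι → ℝ) : ℝ :=
  ∑ i, ∑ j, ginv x i j * hessT g ginv σ i j x

/-- Schouten tensor `P = (1/(n-2))(Ric - (Sc/(2(n-1))) g)` in dimension `n`. -/
def schoutenT {ι : Type} [Fintype ι] [DecidableEq ι] (n : ℕ)
    (g ginv : (ι → ℝ) → ι → ι → ℝ) (i j : ι) (x : ι → ℝ) : ℝ :=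
  (1/((n:ℝ) - 2)) * (ricciT g ginv i j x - (scalT g ginv x / (2*((n:ℝ) - 1))) * g x i j)

/-- Trace `J = g^{ij} P_{ij}` of the Schouten tensor. -/
def schoutenTr {ι : Type} [Fintype ι] [DecidableEq ι] (n : ℕ)
    (g ginv : (ι → ℝ) → ι → ι → ℝ) (x : ι → ℝ) : ℝ :=
  ∑ i, ∑ j, ginv x i j * schoutenT n g ginv i j x

/-- The split-signature metric `x² dt² + 2 dt dz + 2 dx dy` on `ℝ⁴`,
coordinates `(t,x,y,z) = (0,1,2,3)`. -/
def gsplit (x : Fin 4 → ℝ) (i j : Fin 4) : ℝ :=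
  if i = 0 ∧ j = 0 then (x 1)^2
  else if (i = 0 ∧ j = 3) ∨ (i = 3 ∧ j = 0) then 1
  else if (i = 1 ∧ j = 2) ∨ (i = 2 ∧ j = 1) then 1 else 0

/-- The inverse of `gsplit`. -/
def gsplitInv (x : Fin 4 → ℝ) (i j : Fin 4) : ℝ :=
  if i = 3 ∧ j = 3 then -((x 1)^2)
  else if (i = 0 ∧ j = 3) ∨ (i = 3 ∧ j = 0) then 1
  else if (i = 1 ∧ j = 2) ∨ (i = 2 ∧ j = 1) then 1 else 0

/- ### Auxiliary lemmas -/

lemma pderiv'_const (i : Fin 4) (c : ℝ) (x : Fin 4 → ℝ) :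
    pderiv' i (fun _ => c) x = 0 := by
  simp [pderiv']

lemma hasFDerivAt_coord (j : Fin 4) (x : Fin 4 → ℝ) :
    HasFDerivAt (fun y : Fin 4 → ℝ => y j)
      (ContinuousLinearMap.proj j : (Fin 4 → ℝ) →L[ℝ] ℝ) x := by
  exact (ContinuousLinearMap.proj j : (Fin 4 → ℝ) →L[ℝ] ℝ).hasFDerivAt

lemma pderiv'_coord (i j : Fin 4) (x : Fin 4 → ℝ) :
    pderiv' i (fun y => y j) x = if i = j then 1 else 0 := by
  rw [pderiv', (hasFDerivAt_coord j x).fderiv]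
  simp [Pi.single_apply, eq_comm]

lemma pderiv'_neg_coord (i j : Fin 4) (x : Fin 4 → ℝ) :
    pderiv' i (fun y => -(y j)) x = if i = j then -1 else 0 := by
  rw [pderiv', show (fun y : Fin 4 → ℝ => -(y j)) = -(fun y => y j) from rfl,
    (hasFDerivAt_coord j x).neg.fderiv]
  simp [Pi.single_apply, eq_comm]
  split_ifs <;> norm_num

lemma pderiv'_sq (i : Fin 4) (x : Fin 4 → ℝ) :
    pderiv' i (fun y => (y 1)^2) x = if i = 1 then 2 * x 1 else 0 := by
  have h : HasFDerivAt (fun y : Fin 4 → ℝ => (y 1)^2)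
      ((2 * x 1) • (ContinuousLinearMap.proj 1 : (Fin 4 → ℝ) →L[ℝ] ℝ)) x := by
    have := ((hasFDerivAt_coord 1 x).mul (hasFDerivAt_coord 1 x))
    rw [show (fun y : Fin 4 → ℝ => (y 1)^2) = (fun y => y 1) * (fun y => y 1) from by
      ext y; simp [sq]]
    refine this.congr_fderiv ?_
    rw [← add_smul]; congr 1; ring
  rw [pderiv', h.fderiv]
  simp [Pi.single_apply, eq_comm]

lemma pderiv'_gsplit (i l j : Fin 4) (x : Fin 4 → ℝ) :
    pderiv' i (fun y => gsplit y l j) x =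
      if l = 0 ∧ j = 0 ∧ i = 1 then 2 * x 1 else 0 := by
  by_cases h : l = 0 ∧ j = 0
  · obtain ⟨hl, hj⟩ := h; subst hl hj
    have : (fun y : Fin 4 → ℝ => gsplit y 0 0) = fun y => (y 1)^2 := by
      funext y; simp [gsplit]
    rw [this, pderiv'_sq]
    by_cases hi : i = 1 <;> simp [hi]
  · have : (fun y : Fin 4 → ℝ => gsplit y l j) = fun _ => gsplit 0 l j := by
      funext y; simp [gsplit, h]
    rw [this, pderiv'_const]
    rw [if_neg]
    rintro ⟨hl, hj, -⟩; exact h ⟨hl, hj⟩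

lemma christoffel_eq (k i j : Fin 4) (x : Fin 4 → ℝ) :
    christoffel gsplit gsplitInv k i j x =
      if k = 2 ∧ i = 0 ∧ j = 0 then -(x 1)
      else if k = 3 ∧ ((i = 0 ∧ j = 1) ∨ (i = 1 ∧ j = 0)) then x 1 else 0 := by
  fin_cases k <;> fin_cases i <;> fin_cases j <;>
    simp [christoffel, Fin.sum_univ_four, pderiv'_gsplit, gsplitInv]

lemma christoffel_fun (k a b : Fin 4) :
    (fun y => christoffel gsplit gsplitInv k a b y) =
      (fun y : Fin 4 → ℝ =>
        if k = 2 ∧ a = 0 ∧ b = 0 then -(y 1)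
        else if k = 3 ∧ ((a = 0 ∧ b = 1) ∨ (a = 1 ∧ b = 0)) then y 1 else 0) :=
  funext fun y => christoffel_eq k a b y

lemma pderiv'_christoffel (i k a b : Fin 4) (x : Fin 4 → ℝ) :
    pderiv' i (fun y => christoffel gsplit gsplitInv k a b y) x =
      if k = 2 ∧ a = 0 ∧ b = 0 then (if i = 1 then -1 else 0)
      else if k = 3 ∧ ((a = 0 ∧ b = 1) ∨ (a = 1 ∧ b = 0)) then
        (if i = 1 then 1 else 0) else 0 := by
  rw [christoffel_fun]
  by_cases h1 : k = 2 ∧ a = 0 ∧ b = 0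
  · simp only [if_pos h1, pderiv'_neg_coord i 1 x]
  · simp only [if_neg h1]
    by_cases h2 : k = 3 ∧ ((a = 0 ∧ b = 1) ∨ (a = 1 ∧ b = 0))
    · simp only [if_pos h2, pderiv'_coord i 1 x]
    · simp only [if_neg h2, pderiv'_const]

lemma ricci_zero (x : Fin 4 → ℝ) (i j : Fin 4) :
    ricciT gsplit gsplitInv i j x = 0 := by
  fin_cases i <;> fin_cases j <;>
    simp [ricciT, riemUp, Fin.sum_univ_four, christoffel_eq, pderiv'_const,
      pderiv'_coord, pderiv'_neg_coord]

lemma scal_zero (x : Fin 4 → ℝ) : scalT gsplit gsplitInv x = 0 := by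
  simp [scalT, ricci_zero]

lemma schouten_zero (i j : Fin 4) (x : Fin 4 → ℝ) :
    schoutenT 4 gsplit gsplitInv i j x = 0 := by
  simp [schoutenT, ricci_zero, scal_zero]

lemma pderiv'_sigma (c0 c' c'' : ℝ) (j : Fin 4) (x : Fin 4 → ℝ) :
    pderiv' j (fun y => c0 + c' * y 0 + c'' * y 1) x =
      if j = 0 then c' else if j = 1 then c'' else 0 := by
  have h : HasFDerivAt (fun y : Fin 4 → ℝ => c0 + c' * y 0 + c'' * y 1)
      (c' • (ContinuousLinearMap.proj 0 : (Fin 4 → ℝ) →L[ℝ] ℝ)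
        + c'' • (ContinuousLinearMap.proj 1 : (Fin 4 → ℝ) →L[ℝ] ℝ)) x := by
    have := ((hasFDerivAt_const c0 x).add
      ((hasFDerivAt_coord 0 x).const_mul c')).add ((hasFDerivAt_coord 1 x).const_mul c'')
    exact this.congr_fderiv (by rw [zero_add])
  rw [pderiv', h.fderiv]
  fin_cases j <;> simp [Pi.single_apply]

/-- the split pp-wave metric is Ricci-flat, the functions
`σ = c⁰ + c' t + c'' x` satisfy `∇∇σ + Pσ = 0`, they form a 3-dimensional space of
almost Einstein scales, and each `dσ` is null. -/
theorem split_ppwave_almost_einstein_scales :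
    (∀ (x : Fin 4 → ℝ) (i j : Fin 4), ricciT gsplit gsplitInv i j x = 0) ∧
    (∀ (c0 c' c'' : ℝ) (σ : (Fin 4 → ℝ) → ℝ),
      σ = (fun x => c0 + c' * x 0 + c'' * x 1) →
      (∀ (x : Fin 4 → ℝ) (i j : Fin 4),
        hessT gsplit gsplitInv σ i j x + schoutenT 4 gsplit gsplitInv i j x * σ x = 0) ∧
      (∀ x : Fin 4 → ℝ,
        ∑ i, ∑ j, gsplitInv x i j * pderiv' i σ x * pderiv' j σ x = 0)) ∧
    LinearIndependent ℝ
      ![(fun _ : Fin 4 → ℝ => (1:ℝ)), (fun x => x 0), (fun x => x 1)] := by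
  refine ⟨fun x i j => ricci_zero x i j, ?_, ?_⟩
  · intro c0 c' c'' σ hσ
    subst hσ
    constructor
    · intro x i j
      rw [schouten_zero, zero_mul, add_zero, hessT]
      have hconst : (fun y => pderiv' j (fun y => c0 + c' * y 0 + c'' * y 1) y)
          = fun _ : Fin 4 → ℝ => (if j = 0 then c' else if j = 1 then c'' else 0) :=
        funext fun y => pderiv'_sigma c0 c' c'' j y
      rw [hconst, pderiv'_const]
      simp [Fin.sum_univ_four, christoffel_eq, pderiv'_sigma]
    · intro x
      simp [Fin.sum_univ_four, pderiv'_sigma, gsplitInv]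
  · refine Fintype.linearIndependent_iff.mpr fun g hg i => ?_
    have h0 := congrFun hg (fun _ => 0)
    have h1 := congrFun hg (Pi.single 0 1)
    have h2 := congrFun hg (Pi.single 1 1)
    simp [Fin.sum_univ_three, Finset.sum_apply, Pi.single_apply,
      Matrix.vecHead, Matrix.vecTail] at h0 h1 h2
    fin_cases i <;> simp <;> linarith
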